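/- For the IQ-RBF interpolant r(x) = λ_0/(1+ε²(x−x_0)²) + λ_1/(1+ε²(x−x_1)²) satisfying r(x_0)=u_0, r(x_1)=u_1 with x_1 = x_0 + h, h>0, ε>0, the derivative at x_0 equals r'(x_0) = 2(u_1(1+ε²h²) − u_0)/((1+ε²h²)(2+ε²h²)h). -/

import Mathlib

/-- Derivative of the IQ-RBF interpolant at `x0`. -/
theorem iq_interpolant_deriv_at_left (x0 h ε u0 u1 lam0 lam1 : ℝ)
    (hh : 0 < h) (hε : 0 < ε)
    (r : ℝ → ℝ)
    (hr : r = fun x => lam0 / (1 + ε^2 * (x - x0)^2) +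
                       lam1 / (1 + ε^2 * (x - (x0 + h))^2))
    (h0 : r x0 = u0) (h1 : r (x0 + h) = u1) :
    HasDerivAt r (2 * (u1 * (1 + ε^2 * h^2) - u0) /
      ((1 + ε^2 * h^2) * (2 + ε^2 * h^2) * h)) x0 := by
  have hden : ∀ c x : ℝ, (1 : ℝ) + ε^2 * (x - c)^2 ≠ 0 := by
    intro c x; positivity
  have hderiv : ∀ c : ℝ, HasDerivAt (fun x : ℝ => 1 + ε^2 * (x - c)^2)
      (2 * ε^2 * (x0 - c)) x0 := by
    intro c
    have : HasDerivAt (fun x : ℝ => 1 + ε^2 * (x - c)^2)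
        (0 + ε^2 * (2 * (x0 - c)^1 * 1)) x0 :=
      (hasDerivAt_const x0 (1:ℝ)).add
        ((((hasDerivAt_id x0).sub_const c).pow 2).const_mul (ε^2))
    convert this using 1
    ring
  have key : ∀ c lam : ℝ, HasDerivAt (fun x : ℝ => lam / (1 + ε^2 * (x - c)^2))
      ((0 * (1 + ε^2 * (x0 - c)^2) - lam * (2 * ε^2 * (x0 - c))) /
        (1 + ε^2 * (x0 - c)^2)^2) x0 :=
    fun c lam => (hasDerivAt_const x0 lam).div (hderiv c) (hden c x0)
  have H := (key x0 lam0).add (key (x0 + h) lam1)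
  rw [hr]
  refine H.congr_deriv ?_
  have hβ : (1 : ℝ) + ε^2 * h^2 ≠ 0 := by positivity
  have hγ : (2 : ℝ) + ε^2 * h^2 ≠ 0 := by positivity
  have hh' : h ≠ 0 := ne_of_gt hh
  have e0 : u0 = lam0 + lam1 / (1 + ε^2 * h^2) := by
    rw [hr] at h0; rw [← h0]
    have : x0 - (x0 + h) = -h := by ring
    simp only [sub_self, this]
    field_simp
    ring
  have e1 : u1 = lam0 / (1 + ε^2 * h^2) + lam1 := by
    rw [hr] at h1; rw [← h1]
    have h2 : x0 + h - (x0 + h) = 0 := by ring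
    have h3 : x0 + h - x0 = h := by ring
    simp only [h2, h3]
    field_simp
    ring
  rw [e0, e1]
  have h4 : x0 - (x0 + h) = -h := by ring
  rw [sub_self, h4]
  field_simp
  ring
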